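/- Let N \ge 2, let z_1 > ... > z_N be the zeros of H_N, and S_N the matrix with s_{ii} = 1 + \sum_{l\ne i}(z_i-z_l)^{-2}, s_{ij} = -(z_i-z_j)^{-2} for i\ne j. Then the eigenvalues of S_N are exactly 1, 2, ..., N (each with multiplicity one), and for each n = 1,...,N there exists a polynomial q_n of degree n-1 such that (q_n(z_1),...,q_n(z_N))^T is an eigenvector of S_N for eigenvalue n. -/

import Mathlib

open Polynomial Finset Matrix

/-- The physicists' Hermite polynomials, orthogonal w.r.t. the weight `e^{-x^2}`. -/
noncomputable def physHermite : ℕ → Polynomial ℝ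
  | 0 => 1
  | 1 => 2 * X
  | n + 2 => 2 * X * physHermite (n + 1) - C (2 * ((n : ℝ) + 1)) * physHermite n

lemma physHermite_zero : physHermite 0 = 1 := rfl
lemma physHermite_one : physHermite 1 = 2 * X := rfl
lemma physHermite_add_two (n : ℕ) : physHermite (n + 2) =
    2 * X * physHermite (n + 1) - C (2 * ((n : ℝ) + 1)) * physHermite n := rfl

lemma two_poly : (2 : ℝ[X]) = C 2 := by
  have : ((2:ℕ):ℝ[X]) = C ((2:ℕ):ℝ) := (Polynomial.C_eq_natCast (2:ℕ)).symm
  norm_num at this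
  exact this

lemma physHermite_coeff_natDegree :
    ∀ n : ℕ, (physHermite n).coeff n = 2 ^ n ∧ (physHermite n).natDegree ≤ n := by
  intro n
  induction n using Nat.twoStepInduction with
  | zero => simp [physHermite_zero]
  | one =>
    constructor
    · simp [physHermite_one, two_poly, coeff_C_mul]
    · simpa [physHermite_one, two_poly] using
        (natDegree_C_mul_le (2:ℝ) X).trans (by simp)
  | more n ih1 ih2 =>
    obtain ⟨hc1, hd1⟩ := ih2
    obtain ⟨hc0, hd0⟩ := ih1
    rw [physHermite_add_two]
    constructor
    · rw [coeff_sub, two_poly, mul_assoc, coeff_C_mul, coeff_X_mul, hc1, coeff_C_mul]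
      have : (physHermite n).coeff (n + 2) = 0 :=
        coeff_eq_zero_of_natDegree_lt (by omega)
      rw [this, mul_zero, sub_zero]
      ring
    · refine (natDegree_sub_le _ _).trans ?_
      simp only [max_le_iff]
      constructor
      · refine (natDegree_mul_le).trans ?_
        have h2X : (2 * X : ℝ[X]).natDegree ≤ 1 := by
          rw [two_poly]
          exact (natDegree_C_mul_le _ _).trans (by simp)
        omega
      · refine (natDegree_C_mul_le _ _).trans (by omega)

lemma physHermite_natDegree (n : ℕ) : (physHermite n).natDegree = n :=
  natDegree_eq_of_le_of_coeff_ne_zero (physHermite_coeff_natDegree n).2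
    (by rw [(physHermite_coeff_natDegree n).1]; positivity)

lemma physHermite_derivative :
    ∀ n : ℕ, derivative (physHermite (n + 1)) = C (2 * ((n : ℝ) + 1)) * physHermite n := by
  intro n
  induction n using Nat.twoStepInduction with
  | zero =>
    show derivative (physHermite 1) = _
    rw [physHermite_one, physHermite_zero, two_poly]
    simp
  | one =>
    show derivative (physHermite 2) = _
    rw [physHermite_add_two 0, physHermite_one, physHermite_zero, two_poly]
    simp
    ring
  | more n ih1 ih2 =>
    show derivative (physHermite (n + 3)) = _
    rw [physHermite_add_two (n + 1)]
    rw [derivative_sub, derivative_mul, derivative_C_mul, derivative_mul,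
      derivative_X, two_poly, derivative_C]
    rw [ih2, ih1]
    push_cast
    have key : C (2*((n:ℝ)+1+1)) * (2 * X * physHermite (n+1))
        - C (2*((n:ℝ)+1+1)) * (C (2*((n:ℝ)+1)) * physHermite n)
        = C (2*((n:ℝ)+1+1)) * physHermite (n+2) := by
      rw [← mul_sub, ← physHermite_add_two]
    have expand : (0 * X + C 2 * 1) * physHermite (n+2)
        + C 2 * X * (C (2*((n:ℝ)+1+1)) * physHermite (n+1))
        - C (2*((n:ℝ)+1+1)) * (C (2*((n:ℝ)+1)) * physHermite n)
        = C 2 * physHermite (n+2) + (C (2*((n:ℝ)+1+1)) * (2 * X * physHermite (n+1))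
          - C (2*((n:ℝ)+1+1)) * (C (2*((n:ℝ)+1)) * physHermite n)) := by
      rw [two_poly]; ring
    calc (0 * X + C 2 * 1) * physHermite (n+2)
          + C 2 * X * (C (2*((n:ℝ)+1+1)) * physHermite (n+1))
          - C (2*((n:ℝ)+1+1)) * (C (2*((n:ℝ)+1)) * physHermite n)
        = C 2 * physHermite (n+2) + C (2*((n:ℝ)+1+1)) * physHermite (n+2) := by
          rw [expand, key]
      _ = C (2 * ((n:ℝ) + 2 + 1)) * physHermite (n+2) := by
          rw [← add_mul, ← C_add]
          congr 2
          ring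

lemma physHermite_ode (k : ℕ) :
    derivative (derivative (physHermite (k+2))) + C (2*((k:ℝ)+1+1)) * physHermite (k+2)
      = 2 * X * derivative (physHermite (k+2)) := by
  have h1 := physHermite_derivative (k+1)
  push_cast at h1
  rw [h1, derivative_C_mul, physHermite_derivative k, physHermite_add_two k]
  ring

/-- value of the cofactor at the root -/
lemma eval_derivative_factor (a : ℝ) (r : ℝ[X]) :
    ((X - C a) * r).derivative.eval a = r.eval a := by
  rw [derivative_mul]
  simp

/-- double-root division -/
lemma double_root_div (a : ℝ) (h : ℝ[X]) (h0 : h.eval a = 0)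
    (h1 : h.derivative.eval a = 0) : ∃ g : ℝ[X], h = (X - C a)^2 * g := by
  obtain ⟨g1, hg1⟩ : X - C a ∣ h := by
    simpa [h0] using X_sub_C_dvd_sub_C_eval (a := a) (p := h)
  have : g1.eval a = 0 := by
    have := hg1 ▸ h1
    rwa [eval_derivative_factor] at this
  obtain ⟨g2, hg2⟩ : X - C a ∣ g1 := by
    simpa [this] using X_sub_C_dvd_sub_C_eval (a := a) (p := g1)
  exact ⟨g2, by rw [hg1, hg2]; ring⟩

lemma X_sub_C_sq_cancel (a : ℝ) (g g' : ℝ[X])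
    (h : (X - C a)^2 * g = (X - C a)^2 * g') : g = g' :=
  mul_left_cancel₀ (pow_ne_zero 2 (X_sub_C_ne_zero a)) h

lemma eval_derivative_prod_roots {ι : Type*} [DecidableEq ι] (s : Finset ι) (f : ι → ℝ) (t : ℝ) :
    (derivative (∏ l ∈ s, (X - C (f l)))).eval t
      = ∑ l ∈ s, ∏ m ∈ s.erase l, (t - f m) := by
  induction s using Finset.induction_on with
  | empty => simp
  | insert a s ha ih =>
    rw [Finset.prod_insert ha, derivative_mul, eval_add, eval_mul, eval_mul,
      Finset.sum_insert ha, Finset.erase_insert ha]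
    simp only [derivative_sub, derivative_X, derivative_C, sub_zero, eval_one, one_mul,
      eval_prod, eval_sub, eval_X, eval_C]
    rw [ih]
    rw [Finset.mul_sum]
    congr 1
    refine Finset.sum_congr rfl fun l hl => ?_
    rw [Finset.erase_insert_of_ne (by rintro rfl; exact ha hl)]
    rw [Finset.prod_insert (fun hc => ha (Finset.mem_of_mem_erase hc))]

lemma eval_charpoly' {n : ℕ} (M : Matrix (Fin n) (Fin n) ℝ) (t : ℝ) :
    M.charpoly.eval t = (t • (1 : Matrix (Fin n) (Fin n) ℝ) - M).det := by
  rw [Matrix.charpoly, ← coe_evalRingHom, RingHom.map_det]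
  congr 1
  ext i j
  by_cases h : i = j
  · subst h
    simp [Matrix.charmatrix_apply_eq, Matrix.sub_apply, Matrix.one_apply]
  · simp [Matrix.charmatrix_apply_ne _ _ _ h, Matrix.sub_apply, Matrix.one_apply_ne h]
noncomputable def Gop (a : ℝ) (q : ℝ[X]) : ℝ[X] :=
  (C (q.eval a) - q - (C a - X) * derivative q) /ₘ ((X - C a) ^ 2)

lemma num_derivative (a : ℝ) (q : ℝ[X]) :
    derivative (C (q.eval a) - q - (C a - X) * derivative q)
      = (X - C a) * derivative (derivative q) := by
  rw [derivative_sub, derivative_sub, derivative_C, derivative_mul, derivative_sub,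
    derivative_C, derivative_X]
  ring

lemma Gop_spec (a : ℝ) (q : ℝ[X]) :
    C (q.eval a) - q - (C a - X) * derivative q = (X - C a) ^ 2 * Gop a q := by
  have hdvd : (X - C a) ^ 2 ∣ C (q.eval a) - q - (C a - X) * derivative q := by
    obtain ⟨g, hg⟩ := double_root_div a (C (q.eval a) - q - (C a - X) * derivative q)
      (by simp) (by rw [num_derivative]; simp)
    exact ⟨g, hg⟩
  conv_lhs => rw [← modByMonic_add_div (C (q.eval a) - q - (C a - X) * derivative q)
    ((X - C a) ^ 2)]
  rw [(modByMonic_eq_zero_iff_dvd ((monic_X_sub_C a).pow 2)).2 hdvd, zero_add, Gop]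

lemma Gop_add (a : ℝ) (q q' : ℝ[X]) : Gop a (q + q') = Gop a q + Gop a q' := by
  apply X_sub_C_sq_cancel a
  rw [← Gop_spec, mul_add, ← Gop_spec, ← Gop_spec]
  simp only [eval_add, C_add, derivative_add]
  ring

lemma Gop_smul (a c : ℝ) (q : ℝ[X]) : Gop a (c • q) = c • Gop a q := by
  apply X_sub_C_sq_cancel a
  rw [← Gop_spec, mul_smul_comm, ← Gop_spec]
  simp only [smul_eq_C_mul, eval_mul, eval_C, derivative_C_mul, C_mul]
  ring

lemma Gop_zero (a : ℝ) : Gop a 0 = 0 := by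
  apply X_sub_C_sq_cancel a
  rw [← Gop_spec]
  simp

lemma Gop_one (a : ℝ) : Gop a 1 = 0 := by
  apply X_sub_C_sq_cancel a
  rw [← Gop_spec]
  simp

lemma Gop_X (a : ℝ) : Gop a X = 0 := by
  apply X_sub_C_sq_cancel a
  rw [← Gop_spec]
  simp

lemma Gop_natDegree_le (a : ℝ) (q : ℝ[X]) :
    (Gop a q).natDegree ≤ q.natDegree - 2 ∨ Gop a q = 0 := by
  rcases eq_or_ne (Gop a q) 0 with h0 | h0
  · exact Or.inr h0
  left
  have hnum : (C (q.eval a) - q - (C a - X) * derivative q).natDegree ≤ q.natDegree := by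
    rcases Nat.eq_zero_or_pos q.natDegree with hq0 | hq1
    · obtain ⟨c, rfl⟩ := natDegree_eq_zero.mp hq0
      simp
    refine (natDegree_sub_le _ _).trans ?_
    simp only [max_le_iff]
    refine ⟨(natDegree_sub_le _ _).trans (by simp), ?_⟩
    refine natDegree_mul_le.trans ?_
    have h1 : (C a - X : ℝ[X]).natDegree ≤ 1 := by
      refine (natDegree_sub_le _ _).trans (by simp)
    have h2 : (derivative q).natDegree ≤ q.natDegree - 1 := natDegree_derivative_le q
    omega
  have := Gop_spec a q
  have hdeg : (C (q.eval a) - q - (C a - X) * derivative q).natDegree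
      = 2 + (Gop a q).natDegree := by
    rw [this, natDegree_mul (pow_ne_zero 2 (X_sub_C_ne_zero a)) h0, natDegree_pow,
      natDegree_X_sub_C, mul_one]
  omega

lemma Gop_eval_self (a : ℝ) (q : ℝ[X]) :
    2 * (Gop a q).eval a = (derivative (derivative q)).eval a := by
  have h := congrArg derivative (Gop_spec a q)
  rw [num_derivative, derivative_mul, derivative_pow, derivative_sub, derivative_X,
    derivative_C] at h
  have h2 : (X - C a) * derivative (derivative q)
      = (X - C a) * (2 * Gop a q + (X - C a) * derivative (Gop a q)) := by
    rw [h, two_poly]; push_cast; ring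
  have h3 := mul_left_cancel₀ (X_sub_C_ne_zero a) h2
  have := congrArg (eval a) h3
  simp only [eval_add, eval_mul, eval_sub, eval_X, eval_C, eval_ofNat, sub_self,
    zero_mul, add_zero] at this
  linarith
noncomputable def PsiOp {n : ℕ} (z : Fin n → ℝ) (q : ℝ[X]) : ℝ[X] :=
  2 * X * derivative q + derivative (derivative q) - 2 * ∑ l, Gop (z l) q

lemma PsiOp_add {n : ℕ} (z : Fin n → ℝ) (q q' : ℝ[X]) :
    PsiOp z (q + q') = PsiOp z q + PsiOp z q' := by
  simp only [PsiOp, derivative_add, Gop_add, Finset.sum_add_distrib]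
  ring

lemma PsiOp_smul {n : ℕ} (z : Fin n → ℝ) (c : ℝ) (q : ℝ[X]) :
    PsiOp z (c • q) = c • PsiOp z q := by
  simp only [PsiOp, Gop_smul, derivative_smul, ← Finset.smul_sum]
  simp only [smul_eq_C_mul]
  ring

lemma PsiOp_zero {n : ℕ} (z : Fin n → ℝ) : PsiOp z 0 = 0 := by
  simp [PsiOp, Gop_zero]

lemma PsiOp_one {n : ℕ} (z : Fin n → ℝ) : PsiOp z 1 = 0 := by
  simp [PsiOp, Gop_one]

lemma PsiOp_err_natDegree {n : ℕ} (z : Fin n → ℝ) (k : ℕ) :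
    (PsiOp z (X ^ k) - (2 * (k:ℝ)) • X ^ k).natDegree ≤ k - 2 := by
  have hXd : 2 * X * derivative (X ^ k : ℝ[X]) = (2 * (k:ℝ)) • X ^ k := by
    rcases Nat.eq_zero_or_pos k with rfl | hk
    · simp
    rw [derivative_X_pow, smul_eq_C_mul]
    have : X * (C (k:ℝ) * X ^ (k-1)) = C (k:ℝ) * X ^ k := by
      rw [mul_left_comm, ← pow_succ']
      congr 2
      omega
    rw [mul_assoc, this, C_mul, two_poly]
    ring
  rw [PsiOp, hXd]
  have h1 : (derivative (derivative (X ^ k : ℝ[X]))).natDegree ≤ k - 2 := by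
    refine (natDegree_derivative_le _).trans ?_
    have := natDegree_derivative_le (X ^ k : ℝ[X])
    simp only [natDegree_X_pow] at this ⊢
    omega
  have h2 : (2 * ∑ l, Gop (z l) (X ^ k) : ℝ[X]).natDegree ≤ k - 2 := by
    refine (natDegree_mul_le).trans ?_
    have : (∑ l, Gop (z l) (X ^ k) : ℝ[X]).natDegree ≤ k - 2 := by
      refine natDegree_sum_le_of_forall_le _ _ fun l _ => ?_
      rcases Gop_natDegree_le (z l) (X ^ k) with h | h
      · simpa using h
      · simp [h]
    simpa using this
  calc ((2 * (k:ℝ)) • X ^ k + derivative (derivative (X ^ k : ℝ[X]))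
        - 2 * ∑ l, Gop (z l) (X ^ k) - (2 * (k:ℝ)) • X ^ k).natDegree
      = (derivative (derivative (X ^ k : ℝ[X])) - 2 * ∑ l, Gop (z l) (X ^ k)).natDegree := by
        congr 1; ring
    _ ≤ _ := (natDegree_sub_le _ _).trans (by omega)

lemma psi_solve {n : ℕ} (z : Fin n → ℝ) (m : ℕ) :
    ∀ k : ℕ, k < m → ∀ g : ℝ[X], g.natDegree ≤ k →
      ∃ r : ℝ[X], r.natDegree ≤ k ∧ PsiOp z r - (2 * (m:ℝ)) • r = g := by
  intro k
  induction k using Nat.strong_induction_on with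
  | _ k ih =>
    intro hk g hg
    rcases eq_or_ne g 0 with rfl | hg0
    · exact ⟨0, by simp, by simp [PsiOp_zero]⟩
    set j := g.natDegree with hj
    set a := g.leadingCoeff with ha
    have ha0 : a ≠ 0 := leadingCoeff_ne_zero.2 hg0
    have hjm : (2 * (j:ℝ) - 2 * m) ≠ 0 := by
      have : j < m := lt_of_le_of_lt hg hk
      intro hc
      have : (j:ℝ) = m := by linarith
      exact absurd (Nat.cast_injective this) (by omega)
    set c := a / (2 * (j:ℝ) - 2 * m) with hc
    have hkey : PsiOp z (c • X ^ j) - (2 * (m:ℝ)) • (c • X ^ j)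
        = a • X ^ j + c • (PsiOp z (X ^ j) - (2 * (j:ℝ)) • X ^ j) := by
      rw [PsiOp_smul, show a = c * (2 * (j:ℝ) - 2 * m) by rw [hc, div_mul_cancel₀ _ hjm]]
      module
    have hgC0 : j = 0 → g = C a := by
      intro hj0
      have h0 : g.natDegree = 0 := by omega
      rw [ha, leadingCoeff, h0]
      exact eq_C_of_natDegree_eq_zero h0
    rcases eq_or_ne j 0 with hj0 | hjpos
    · refine ⟨c • X ^ j, (natDegree_smul_le _ _).trans (by simpa using hg), ?_⟩
      rw [hkey, hj0]
      simp [PsiOp_one, hgC0 hj0, smul_eq_C_mul]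
    · have hj1 : 1 ≤ j := Nat.one_le_iff_ne_zero.2 hjpos
      set E := PsiOp z (X ^ j) - (2 * (j:ℝ)) • X ^ j with hE
      set g' := g - (a • X ^ j + c • E) with hg'
      have hdeg1 : (g - a • X ^ j).natDegree < j := by
        rw [smul_eq_C_mul, hj, ha, Polynomial.self_sub_C_mul_X_pow]
        calc g.eraseLead.natDegree ≤ g.natDegree - 1 :=
              Polynomial.eraseLead_natDegree_le g
          _ < j := by omega
      have hdeg2 : (c • E).natDegree < j :=
        lt_of_le_of_lt ((natDegree_smul_le _ _).trans (PsiOp_err_natDegree z j))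
          (by omega)
      have hdegg' : g'.natDegree < j := by
        rw [hg', show g - (a • X ^ j + c • E) = (g - a • X ^ j) - c • E by ring]
        exact lt_of_le_of_lt (natDegree_sub_le _ _) (max_lt hdeg1 hdeg2)
      obtain ⟨r₁, hr₁d, hr₁⟩ := ih (j-1) (by omega) (by omega) g' (by omega)
      refine ⟨c • X ^ j + r₁, ?_, ?_⟩
      · refine (natDegree_add_le _ _).trans ?_
        have h1 : (c • X ^ j : ℝ[X]).natDegree ≤ j :=
          (natDegree_smul_le _ _).trans (by simp)
        omega
      · have expand : PsiOp z (c • X ^ j) + PsiOp z r₁ - (2*(m:ℝ)) • (c • X ^ j + r₁)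
            = (PsiOp z (c • X ^ j) - (2*(m:ℝ)) • (c • X ^ j))
              + (PsiOp z r₁ - (2*(m:ℝ)) • r₁) := by module
        rw [PsiOp_add, expand, hkey, hr₁, hg']
        ring
lemma exists_eigenpoly {n : ℕ} (z : Fin n → ℝ) (m : ℕ) :
    ∃ q : ℝ[X], q.natDegree = m ∧ q ≠ 0 ∧ PsiOp z q = (2 * (m:ℝ)) • q := by
  rcases Nat.eq_zero_or_pos m with rfl | hm
  · exact ⟨1, by simp, one_ne_zero, by simp [PsiOp_one]⟩
  obtain ⟨r, hrd, hr⟩ := psi_solve z m (m-1) (by omega)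
      ((2*(m:ℝ)) • X ^ m - PsiOp z (X ^ m))
      (by
        have h := PsiOp_err_natDegree z m
        have heq : (2*(m:ℝ)) • X^m - PsiOp z (X^m)
            = -(PsiOp z (X^m) - (2*(m:ℝ))•X^m) := by ring
        rw [heq, natDegree_neg]
        omega)
  have hrm : r.natDegree < m := by omega
  have hdeg : (X ^ m + r : ℝ[X]).natDegree = m := by
    rw [natDegree_add_eq_left_of_natDegree_lt (by simpa using hrm), natDegree_X_pow]
  refine ⟨X ^ m + r, hdeg, ?_, ?_⟩
  · intro h
    rw [h] at hdeg
    simp at hdeg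
    omega
  · rw [PsiOp_add, show PsiOp z r = (2*(m:ℝ))•r + ((2*(m:ℝ))•X^m - PsiOp z (X^m)) by
      linear_combination hr]
    module
theorem stmt_8 (N : ℕ) (hN : 2 ≤ N) (z : Fin N → ℝ)
    (hord : ∀ i j : Fin N, i < j → z j < z i)
    (hroot : ∀ i, (physHermite N).eval (z i) = 0)
    (S : Matrix (Fin N) (Fin N) ℝ)
    (hS : ∀ i j, S i j = if i = j
      then 1 + ∑ l ∈ Finset.univ.erase i, ((z i - z l) ^ 2)⁻¹
      else -((z i - z j) ^ 2)⁻¹) :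
    S.charpoly = ∏ n ∈ Finset.range N, (X - C ((n : ℝ) + 1)) ∧
      ∀ n : ℕ, 1 ≤ n → n ≤ N →
        ∃ q : Polynomial ℝ, q.natDegree = n - 1 ∧
          (fun i => q.eval (z i)) ≠ (0 : Fin N → ℝ) ∧
          S.mulVec (fun i => q.eval (z i)) = (n : ℝ) • (fun i => q.eval (z i)) := by
  classical
  have hne : ∀ {i j : Fin N}, i ≠ j → z i ≠ z j := by
    intro i j hij
    rcases lt_or_gt_of_ne hij with h | h
    · exact (hord i j h).ne'
    · exact (hord j i h).ne
  have hinj : Function.Injective z := fun i j h => by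
    by_contra hc; exact hne hc h
  set PP : ℝ[X] := ∏ i, (X - C (z i)) with hPidef
  have hPimonic : PP.Monic := monic_prod_of_monic _ _ fun i _ => monic_X_sub_C _
  have hPideg : PP.natDegree = N := by
    rw [hPidef, natDegree_prod _ _ fun i _ => X_sub_C_ne_zero _]
    simp
  have hPieval : ∀ i, PP.eval (z i) = 0 := fun i => by
    rw [hPidef, eval_prod]
    exact Finset.prod_eq_zero (Finset.mem_univ i) (by simp)
  -- physHermite N = C 2^N * PP
  have hH : physHermite N = C ((2:ℝ)^N) * PP := by
    have hD : physHermite N - C ((2:ℝ)^N) * PP = 0 := by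
      apply eq_zero_of_natDegree_lt_card_of_eval_eq_zero _ hinj
      · intro i
        simp [hroot i, hPieval i]
      · rw [Fintype.card_fin]
        set D := physHermite N - C ((2:ℝ)^N) * PP with hDdef
        rcases eq_or_ne D 0 with h0 | h0
        · rw [h0]; simpa using by omega
        have hcoeff : D.coeff N = 0 := by
          rw [hDdef, coeff_sub, (physHermite_coeff_natDegree N).1, coeff_C_mul,
            show PP.coeff N = 1 from hPideg ▸ hPimonic.coeff_natDegree]
          ring
        have hle : D.natDegree ≤ N := by
          refine (natDegree_sub_le _ _).trans ?_
          simp only [max_le_iff]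
          exact ⟨(physHermite_coeff_natDegree N).2,
            (natDegree_C_mul_le _ _).trans (le_of_eq hPideg)⟩
        rcases lt_or_eq_of_le hle with h | h
        · exact h
        · exact absurd (leadingCoeff_eq_zero.mp (by rwa [leadingCoeff, h])) h0
    linear_combination hD
  -- ODE for PP
  have hPiode : derivative (derivative PP) + C (2*(N:ℝ)) * PP = 2 * X * derivative PP := by
    obtain ⟨k, rfl⟩ : ∃ k, N = k + 2 := ⟨N - 2, by omega⟩
    have hode := physHermite_ode k
    rw [hH, derivative_C_mul, derivative_C_mul] at hode
    apply mul_left_cancel₀ (a := C ((2:ℝ)^(k+2))) (by simp)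
    have hc : 2*((k:ℝ)+1+1) = 2*((k:ℝ)+2) := by ring
    rw [hc] at hode
    push_cast
    linear_combination hode
  have hroot_sum : ∀ i : Fin N, ∑ l ∈ Finset.univ.erase i, (z i - z l)⁻¹ = z i := by
    intro i
    set Pii : ℝ[X] := ∏ l ∈ Finset.univ.erase i, (X - C (z l)) with hPii
    have hsplit : PP = (X - C (z i)) * Pii :=
      (Finset.mul_prod_erase _ _ (Finset.mem_univ i)).symm
    have hPiie : Pii.eval (z i) = ∏ l ∈ Finset.univ.erase i, (z i - z l) := by
      rw [hPii, eval_prod]; simp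
    have hPiine : Pii.eval (z i) ≠ 0 := by
      rw [hPiie]
      exact Finset.prod_ne_zero_iff.2 fun l hl =>
        sub_ne_zero.2 (hne (Finset.ne_of_mem_erase hl).symm)
    have h1 : (derivative PP).eval (z i) = Pii.eval (z i) := by
      rw [hsplit]; exact eval_derivative_factor _ _
    have hd1 : derivative PP = Pii + (X - C (z i)) * derivative Pii := by
      rw [hsplit, derivative_mul]; simp
    have h2 : (derivative (derivative PP)).eval (z i) = 2 * (derivative Pii).eval (z i) := by
      rw [hd1, derivative_add, derivative_mul]
      simp
      ring
    have h3 : (derivative Pii).eval (z i) = z i * Pii.eval (z i) := by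
      have hode := congrArg (eval (z i)) hPiode
      simp only [eval_add, eval_mul, eval_ofNat, eval_X, eval_C, hPieval i, h2, h1,
        mul_zero, add_zero] at hode
      linarith
    have h4 : (derivative Pii).eval (z i)
        = ∑ l ∈ Finset.univ.erase i, ∏ m ∈ (Finset.univ.erase i).erase l, (z i - z m) := by
      rw [hPii]; exact eval_derivative_prod_roots _ _ _
    have h5 : ∀ l ∈ Finset.univ.erase i,
        (z i - z l)⁻¹ = (∏ m ∈ (Finset.univ.erase i).erase l, (z i - z m)) / Pii.eval (z i) := by
      intro l hl
      have hprod : (z i - z l) * ∏ m ∈ (Finset.univ.erase i).erase l, (z i - z m)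
          = Pii.eval (z i) := by
        rw [hPiie]
        exact Finset.mul_prod_erase (Finset.univ.erase i) (fun m => z i - z m) hl
      have hzl : z i - z l ≠ 0 := sub_ne_zero.2 (hne (Finset.ne_of_mem_erase hl).symm)
      rw [eq_div_iff hPiine, ← hprod]
      field_simp
    calc ∑ l ∈ Finset.univ.erase i, (z i - z l)⁻¹
        = ∑ l ∈ Finset.univ.erase i,
            (∏ m ∈ (Finset.univ.erase i).erase l, (z i - z m)) / Pii.eval (z i) :=
          Finset.sum_congr rfl h5
      _ = (derivative Pii).eval (z i) / Pii.eval (z i) := by rw [← Finset.sum_div, ← h4]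
      _ = z i := by rw [h3]; field_simp
  have eig : ∀ n : ℕ, 1 ≤ n → n ≤ N →
      ∃ q : Polynomial ℝ, q.natDegree = n - 1 ∧
        (fun i => q.eval (z i)) ≠ (0 : Fin N → ℝ) ∧
        S.mulVec (fun i => q.eval (z i)) = (n : ℝ) • (fun i => q.eval (z i)) := by
    intro n hn1 hnN
    set m := n - 1 with hm
    obtain ⟨q, hqdeg, hq0, hqPsi⟩ := exists_eigenpoly z m
    refine ⟨q, hqdeg, ?_, ?_⟩
    · intro hv
      apply hq0
      apply eq_zero_of_natDegree_lt_card_of_eval_eq_zero q hinj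
      · intro i; exact congrFun hv i
      · rw [Fintype.card_fin]; omega
    · funext i
      have hzli : ∀ l ∈ Finset.univ.erase i, z i - z l ≠ 0 := fun l hl =>
        sub_ne_zero.2 (hne (Finset.ne_of_mem_erase hl).symm)
      have hterm : ∀ l ∈ Finset.univ.erase i,
          (q.eval (z i) - q.eval (z l)) * ((z i - z l)^2)⁻¹
            = (derivative q).eval (z i) * (z i - z l)⁻¹ - (Gop (z l) q).eval (z i) := by
        intro l hl
        have h := congrArg (eval (z i)) (Gop_spec (z l) q)
        simp only [eval_sub, eval_mul, eval_pow, eval_C, eval_X] at h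
        have hd := hzli l hl
        have hAB : q.eval (z i) - q.eval (z l)
            = (z i - z l) * (derivative q).eval (z i)
              - (z i - z l)^2 * (Gop (z l) q).eval (z i) := by linear_combination -h
        rw [hAB]
        field_simp
      have hGi : 2 * (Gop (z i) q).eval (z i) = (derivative (derivative q)).eval (z i) :=
        Gop_eval_self (z i) q
      have hPsi := congrArg (eval (z i)) hqPsi
      simp only [PsiOp, eval_add, eval_sub, eval_mul, eval_ofNat, eval_X, eval_smul,
        eval_finset_sum, smul_eq_mul] at hPsi
      have hsumG : ∑ l, (Gop (z l) q).eval (z i)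
          = (Gop (z i) q).eval (z i)
            + ∑ l ∈ Finset.univ.erase i, (Gop (z l) q).eval (z i) :=
        (Finset.add_sum_erase _ _ (Finset.mem_univ i)).symm
      have hKEY : ∑ l ∈ Finset.univ.erase i,
          (q.eval (z i) - q.eval (z l)) * ((z i - z l)^2)⁻¹ = (m:ℝ) * q.eval (z i) := by
        rw [Finset.sum_congr rfl hterm, Finset.sum_sub_distrib, ← Finset.mul_sum,
          hroot_sum i]
        have hrearr : ∑ l ∈ Finset.univ.erase i, (Gop (z l) q).eval (z i)
            = (∑ l, (Gop (z l) q).eval (z i)) - (Gop (z i) q).eval (z i) := by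
          rw [hsumG]; ring
        rw [hrearr]
        linarith [hPsi, hGi]
      have hSii : S i i = 1 + ∑ l ∈ Finset.univ.erase i, ((z i - z l)^2)⁻¹ := by
        rw [hS]; simp
      have hSil : ∀ l ∈ Finset.univ.erase i, S i l = -((z i - z l)^2)⁻¹ := by
        intro l hl
        rw [hS, if_neg (Finset.ne_of_mem_erase hl).symm]
      have hnm : (n:ℝ) = (m:ℝ) + 1 := by
        have : n = m + 1 := by omega
        rw [this]; push_cast; ring
      show (S.mulVec fun j => q.eval (z j)) i = ((n:ℝ) • fun j => q.eval (z j)) i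
      rw [Pi.smul_apply, smul_eq_mul]
      calc (S.mulVec fun j => q.eval (z j)) i
          = ∑ l, S i l * q.eval (z l) := by
            simp [Matrix.mulVec, dotProduct]
        _ = S i i * q.eval (z i)
            + ∑ l ∈ Finset.univ.erase i, S i l * q.eval (z l) :=
          (Finset.add_sum_erase _ _ (Finset.mem_univ i)).symm
        _ = q.eval (z i) + ∑ l ∈ Finset.univ.erase i,
              ((q.eval (z i) - q.eval (z l)) * ((z i - z l)^2)⁻¹) := by
            have hsum2 : ∑ l ∈ Finset.univ.erase i, S i l * q.eval (z l)
                = ∑ l ∈ Finset.univ.erase i,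
                    -(((z i - z l)^2)⁻¹ * q.eval (z l)) :=
              Finset.sum_congr rfl fun l hl => by rw [hSil l hl]; ring
            rw [hSii, hsum2, add_mul, one_mul, Finset.sum_mul, add_assoc,
              ← Finset.sum_add_distrib]
            congr 1
            exact Finset.sum_congr rfl fun l hl => by ring
        _ = q.eval (z i) + (m:ℝ) * q.eval (z i) := by rw [hKEY]
        _ = (n:ℝ) * q.eval (z i) := by rw [hnm]; ring
    -- charpoly
  have hcp : S.charpoly = ∏ n ∈ Finset.range N, (X - C ((n : ℝ) + 1)) := by
    have hpmonic : (∏ n ∈ Finset.range N, (X - C ((n : ℝ) + 1))).Monic :=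
      monic_prod_of_monic _ _ fun i _ => monic_X_sub_C _
    have hpdeg : (∏ n ∈ Finset.range N, (X - C ((n : ℝ) + 1))).natDegree = N := by
      rw [natDegree_prod _ _ fun i _ => X_sub_C_ne_zero _]
      simp only [natDegree_X_sub_C]
      simp
    have hcdeg : S.charpoly.natDegree = N := by
      rw [Matrix.charpoly_natDegree_eq_dim, Fintype.card_fin]
    have hcmonic := S.charpoly_monic
    have heval : ∀ k : Fin N,
        (S.charpoly - ∏ n ∈ Finset.range N, (X - C ((n : ℝ) + 1))).eval
          (((k:ℕ):ℝ) + 1) = 0 := by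
      intro k
      rw [eval_sub]
      have h1 : (∏ n ∈ Finset.range N, (X - C ((n : ℝ) + 1))).eval (((k:ℕ):ℝ)+1) = 0 := by
        rw [eval_prod]
        exact Finset.prod_eq_zero (Finset.mem_range.2 k.isLt) (by simp)
      have h2 : S.charpoly.eval (((k:ℕ):ℝ)+1) = 0 := by
        obtain ⟨q, hqd, hqv, hqm⟩ := eig ((k:ℕ)+1) (by omega) (by omega)
        rw [eval_charpoly']
        refine Matrix.exists_mulVec_eq_zero_iff.mp ⟨_, hqv, ?_⟩
        rw [Matrix.sub_mulVec, Matrix.smul_mulVec, Matrix.one_mulVec, hqm]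
        push_cast
        simp
      rw [h1, h2, sub_zero]
    have hD0 : S.charpoly - ∏ n ∈ Finset.range N, (X - C ((n : ℝ) + 1)) = 0 := by
      apply eq_zero_of_natDegree_lt_card_of_eval_eq_zero
        (f := fun k : Fin N => ((k:ℕ):ℝ) + 1) _ ?_ heval ?_
      · intro a b hab
        simp only [add_left_inj, Nat.cast_inj] at hab
        exact Fin.ext hab
      · rw [Fintype.card_fin]
        rcases eq_or_ne (S.charpoly - ∏ n ∈ Finset.range N, (X - C ((n : ℝ) + 1))) 0
          with h0 | h0
        · rw [h0]; simp; omega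
        · have hdeq : S.charpoly.degree
              = (∏ n ∈ Finset.range N, (X - C ((n : ℝ) + 1))).degree := by
            rw [degree_eq_natDegree hcmonic.ne_zero, degree_eq_natDegree hpmonic.ne_zero,
              hcdeg, hpdeg]
          have hdlt := degree_sub_lt hdeq hcmonic.ne_zero
            (by rw [hcmonic.leadingCoeff, hpmonic.leadingCoeff])
          refine (natDegree_lt_iff_degree_lt h0).2 ?_
          exact hdlt.trans_eq (by rw [degree_eq_natDegree hcmonic.ne_zero, hcdeg])
    linear_combination hD0
  exact ⟨hcp, eig⟩
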